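/- The ordinal space [0, ω₁] (all ordinals ≤ ω₁ with the order topology) is not a Δ-space. -/

import Mathlib

open Ordinal

noncomputable section DeltaAux
namespace DeltaAux
open Cardinal Set

universe u

lemma omega1_isLimit : Order.IsSuccLimit (ω_ 1) := isSuccLimit_omega 1

lemma add_one_lt_omega1 {a : Ordinal.{u}} (h : a < ω_ 1) : a + 1 < ω_ 1 := by
  rw [Ordinal.add_one_eq_succ]; exact omega1_isLimit.succ_lt h

lemma aux_lift : (ℵ_ (1 : Ordinal.{u + 1})) = Cardinal.lift.{u + 1, u} (ℵ_ (1 : Ordinal.{u})) := by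
  rw [Cardinal.lift_aleph]
  congr 1
  simp

lemma countable_Iio {α : Ordinal.{u}} (h : α < ω_ 1) : (Set.Iio α).Countable := by
  rw [Cardinal.countable_iff_lt_aleph_one, Cardinal.mk_Iio_ordinal, aux_lift]
  exact Cardinal.lift_lt.mpr (by rwa [← Cardinal.lt_ord, ord_aleph])

lemma uncountable_Iio_omega1 : ¬ (Set.Iio (ω_ 1) : Set Ordinal.{u}).Countable := by
  rw [Cardinal.countable_iff_lt_aleph_one, Cardinal.mk_Iio_ordinal, card_omega, aux_lift]
  simp

lemma sup_lt_omega1 {ι : Type} [Countable ι] {f : ι → Ordinal.{u}}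
    (h : ∀ i, f i < ω_ 1) : iSup f < ω_ 1 := by
  exact Ordinal.iSup_lt_omega_one h

lemma sup_lt_omega1' {ι : Type*} [Countable ι] {f : ι → Ordinal.{u}}
    (h : ∀ i, f i < ω_ 1) : iSup f < ω_ 1 := by
  rcases isEmpty_or_nonempty ι with hι | hι
  · have : iSup f = 0 := by
      rw [iSup, Set.range_eq_empty, csSup_empty]
      rfl
    rw [this]; exact omega_pos 1
  · obtain ⟨s, hs⟩ := exists_surjective_nat ι
    have hle : iSup f ≤ iSup (f ∘ s) := by
      refine ciSup_le fun i => ?_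
      obtain ⟨n, rfl⟩ := hs i
      exact le_ciSup (Ordinal.bddAbove_range (f ∘ s)) n
    exact lt_of_le_of_lt hle (sup_lt_omega1 (fun n => h (s n)))

/-- A club subset of `ω₁` (unbounded below `ω₁` and closed under countable monotone sups). -/
def IsClubBelow (C : Set Ordinal.{u}) : Prop :=
  C ⊆ Set.Iio (ω_ 1) ∧ (∀ γ < ω_ 1, ∃ α ∈ C, γ < α) ∧
    ∀ f : ℕ → Ordinal, Monotone f → (∀ n, f n ∈ C) → iSup f ∈ C

/-- A stationary subset of `ω₁`. -/
def IsStat (S : Set Ordinal.{u}) : Prop := ∀ C, IsClubBelow C → (S ∩ C).Nonempty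

lemma IsStat.mono {S T : Set Ordinal.{u}} (h : S ⊆ T) (hS : IsStat S) : IsStat T :=
  fun C hC => (hS C hC).imp fun _ hx => ⟨h hx.1, hx.2⟩

lemma isStat_tail {β : Ordinal.{u}} (hβ : β < ω_ 1) : IsStat (Set.Ioo β (ω_ 1)) := by
  intro C hC
  obtain ⟨α, hαC, hβα⟩ := hC.2.1 β hβ
  exact ⟨α, ⟨hβα, hC.1 hαC⟩, hαC⟩

/-- Countable intersections of clubs are clubs. -/
lemma isClubBelow_iInter {C : ℕ → Set Ordinal.{u}} (hC : ∀ k, IsClubBelow (C k)) :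
    IsClubBelow (⋂ k, C k) := by
  have hsub : ∀ k, C k ⊆ Set.Iio (ω_ 1) := fun k => (hC k).1
  refine ⟨fun x hx => hsub 0 (Set.mem_iInter.mp hx 0), ?_, ?_⟩
  · -- unboundedness
    intro γ hγ
    -- choose a "next element" function for each club
    have hnxt : ∀ k (δ : Ordinal.{u}), ∃ α, δ < ω_ 1 → α ∈ C k ∧ δ < α := by
      intro k δ
      by_cases hδ : δ < ω_ 1
      · obtain ⟨α, h1, h2⟩ := (hC k).2.1 δ hδ
        exact ⟨α, fun _ => ⟨h1, h2⟩⟩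
      · exact ⟨0, fun h => absurd h hδ⟩
    choose nxt hnxt using hnxt
    -- build an interleaved sequence
    let g : ℕ → Ordinal := fun i => Nat.rec γ (fun i δ => nxt (Nat.unpair i).1 δ) i
    have hgsucc : ∀ i, g (i + 1) = nxt (Nat.unpair i).1 (g i) := fun _ => rfl
    have hglt : ∀ i, g i < ω_ 1 := by
      intro i
      induction i with
      | zero => exact hγ
      | succ i ih =>
        rw [hgsucc i]
        exact hsub _ ((hnxt _ _ ih).1)
    have hnxt1 : ∀ i, g (i + 1) ∈ C (Nat.unpair i).1 := by
      intro i; rw [hgsucc i]; exact (hnxt _ _ (hglt i)).1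
    have hgmono : StrictMono g := by
      apply strictMono_nat_of_lt_succ
      intro i
      rw [hgsucc i]
      exact (hnxt _ _ (hglt i)).2
    have hbdd : BddAbove (Set.range g) := Ordinal.bddAbove_range g
    refine ⟨iSup g, ?_, ?_⟩
    · rw [Set.mem_iInter]
      intro k
      -- the subsequence along pairs (k, m)
      let f : ℕ → Ordinal := fun m => g (Nat.pair k m + 1)
      have hfmem : ∀ m, f m ∈ C k := by
        intro m
        have := hnxt1 (Nat.pair k m)
        rwa [Nat.unpair_pair] at this
      have hfmono : Monotone f := by
        intro m m' hmm'
        rcases eq_or_lt_of_le hmm' with rfl | h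
        · exact le_rfl
        · exact (hgmono.monotone (Nat.succ_le_succ (Nat.pair_lt_pair_right k h).le))
      have : iSup f = iSup g := by
        apply le_antisymm
        · exact ciSup_le fun m => le_ciSup hbdd (Nat.pair k m + 1)
        · refine ciSup_le fun i => ?_
          have h1 : g i ≤ g (Nat.pair k i + 1) :=
            hgmono.monotone (Nat.le_succ_of_le (Nat.right_le_pair k i))
          exact le_trans h1 (le_ciSup (Ordinal.bddAbove_range f) i)
      rw [← this]
      exact (hC k).2.2 f hfmono hfmem
    · calc γ = g 0 := rfl
        _ < g 1 := hgmono Nat.zero_lt_one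
        _ ≤ iSup g := le_ciSup hbdd 1
  · -- closedness
    intro f hf hmem
    rw [Set.mem_iInter]
    intro k
    exact (hC k).2.2 f hf (fun n => Set.mem_iInter.mp (hmem n) k)

/-- If a countable union covers a stationary set, one of the pieces is stationary. -/
lemma isStat_of_iUnion {S : Set Ordinal.{u}} {T : ℕ → Set Ordinal.{u}}
    (hS : IsStat S) (hcov : S ⊆ ⋃ n, T n) : ∃ n, IsStat (T n) := by
  by_contra h
  push_neg at h
  have h' : ∀ n, ∃ C, IsClubBelow C ∧ ¬ (T n ∩ C).Nonempty := by
    intro n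
    have := h n
    unfold IsStat at this
    push_neg at this
    obtain ⟨C, h1, h2⟩ := this
    exact ⟨C, h1, by rw [h2]; simp⟩
  choose C hclub hdisj using h'
  obtain ⟨α, hαS, hαC⟩ := hS _ (isClubBelow_iInter hclub)
  obtain ⟨n, hn⟩ := Set.mem_iUnion.mp (hcov hαS)
  exact hdisj n ⟨α, hn, Set.mem_iInter.mp hαC n⟩

/-- Weak Fodor lemma: a regressive function on a stationary set is constant
on an unbounded set. -/
lemma fodor {S : Set Ordinal.{u}} (hS : IsStat S) (_hSsub : S ⊆ Set.Iio (ω_ 1))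
    (g : Ordinal → Ordinal) (hg : ∀ α ∈ S, g α < α) :
    ∃ β, ∀ γ < ω_ 1, ∃ α ∈ S, γ < α ∧ g α = β := by
  by_contra hcon
  push_neg at hcon
  -- every fiber is bounded
  choose h hh1 hh2 using hcon
  -- hh1 : ∀ β, h β < ω_ 1 ; hh2 : ∀ β, ∀ α ∈ S, h β < α → g α ≠ β
  -- the club of closure points of h
  set C : Set Ordinal.{u} := {α | α < ω_ 1 ∧ ∀ β < α, h β < α} with hCdef
  have hclub : IsClubBelow C := by
    refine ⟨fun x hx => hx.1, ?_, ?_⟩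
    · intro γ hγ
      -- iterate the bounding function
      have hF : ∀ δ : Ordinal.{u}, ∃ ε, δ < ω_ 1 →
          δ < ε ∧ ε < ω_ 1 ∧ ∀ β ≤ δ, h β < ε := by
        intro δ
        by_cases hδ : δ < ω_ 1
        swap
        · exact ⟨0, fun h => absurd h hδ⟩
        haveI : Countable (Set.Iio (δ + 1) : Set Ordinal.{u}) := (countable_Iio
          (add_one_lt_omega1 hδ)).to_subtype
        set u : (Set.Iio (δ + 1) : Set Ordinal.{u}) → Ordinal.{u} :=
          fun β => h β.1 + 1 with hu
        set ε := max (δ + 1) (iSup u) with hε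
        refine ⟨ε, fun _ => ⟨lt_of_lt_of_le (lt_add_one δ) (le_max_left _ _), ?_, ?_⟩⟩
        · apply max_lt (add_one_lt_omega1 hδ)
          exact sup_lt_omega1' (f := u) fun β => add_one_lt_omega1 (hh1 _)
        · intro β hβ
          haveI : Countable ↥(Set.range u) := (Set.countable_range u).to_subtype
          have : u ⟨β, lt_of_le_of_lt hβ (lt_add_one δ)⟩ ≤ iSup u :=
            le_ciSup (Ordinal.bddAbove_of_small (s := Set.range u))
              (⟨β, lt_of_le_of_lt hβ (lt_add_one δ)⟩ : (Set.Iio (δ + 1) : Set Ordinal.{u}))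
          have hthis : h β + 1 ≤ iSup u := this
          exact lt_of_lt_of_le (lt_of_lt_of_le (lt_add_one _) hthis) (le_max_right _ _)
      choose F hF using hF
      let g' : ℕ → Ordinal := fun i => Nat.rec γ (fun _ δ => F δ) i
      have hgsucc : ∀ i, g' (i + 1) = F (g' i) := fun _ => rfl
      have hglt : ∀ i, g' i < ω_ 1 := by
        intro i
        induction i with
        | zero => exact hγ
        | succ i ih =>
          rw [hgsucc i]; exact (hF _ ih).2.1
      have hgmono : StrictMono g' := by
        apply strictMono_nat_of_lt_succ
        intro i; rw [hgsucc i]; exact (hF _ (hglt i)).1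
      have hbdd : BddAbove (Set.range g') := Ordinal.bddAbove_range g'
      have hsup : iSup g' < ω_ 1 := sup_lt_omega1 hglt
      refine ⟨iSup g', ⟨hsup, ?_⟩, ?_⟩
      · intro β hβ
        obtain ⟨i, hi⟩ := (lt_ciSup_iff hbdd).mp hβ
        calc h β < g' (i + 1) := by rw [hgsucc i]; exact (hF _ (hglt i)).2.2 β hi.le
          _ ≤ iSup g' := le_ciSup hbdd (i + 1)
      · calc γ = g' 0 := rfl
          _ < g' 1 := hgmono Nat.zero_lt_one
          _ ≤ iSup g' := le_ciSup hbdd 1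
    · -- closed
      intro f hf hmem
      have hflt : ∀ n, f n < ω_ 1 := fun n => (hmem n).1
      have hbdd : BddAbove (Set.range f) := Ordinal.bddAbove_range f
      refine ⟨sup_lt_omega1 hflt, ?_⟩
      intro β hβ
      obtain ⟨n, hn⟩ := (lt_ciSup_iff hbdd).mp hβ
      exact lt_of_lt_of_le ((hmem n).2 β hn) (le_ciSup hbdd n)
  obtain ⟨α, hαS, hαC⟩ := hS C hclub
  have h1 : g α < α := hg α hαS
  have h2 : h (g α) < α := hαC.2 _ h1
  exact hh2 (g α) α hαS h2 rfl

/-- There exist countably many pairwise disjoint stationary subsets of `ω₁`. -/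
lemma exists_disjoint_stationary :
    ∃ S : ℕ → Set Ordinal.{u}, (∀ k, IsStat (S k)) ∧ (∀ k, S k ⊆ Set.Ioo 0 (ω_ 1)) ∧
      ∀ j k α, α ∈ S j → α ∈ S k → j = k := by
  -- injections of initial segments into ℕ
  have hinj : ∀ α : Ordinal.{u}, ∃ f : Ordinal.{u} → ℕ, α < ω_ 1 →
      Set.InjOn f (Set.Iio α) := by
    intro α
    by_cases hα : α < ω_ 1
    · obtain ⟨f, hf⟩ := Set.countable_iff_exists_injOn.mp (countable_Iio hα)
      exact ⟨f, fun _ => hf⟩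
    · exact ⟨fun _ => 0, fun h => absurd h hα⟩
  choose e he using hinj
  -- the Ulam matrix
  set A : ℕ → Ordinal.{u} → Set Ordinal.{u} :=
    fun n β => {α | β < α ∧ α < ω_ 1 ∧ e α β = n} with hA
  -- for each β some column entry is stationary
  have step1 : ∀ β : Ordinal.{u}, ∃ n, β < ω_ 1 → IsStat (A n β) := by
    intro β
    by_cases hβ : β < ω_ 1
    · have hcov : Set.Ioo β (ω_ 1) ⊆ ⋃ n, A n β := by
        intro α hα
        exact Set.mem_iUnion.mpr ⟨e α β, hα.1, hα.2, rfl⟩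
      obtain ⟨n, hn⟩ := isStat_of_iUnion (isStat_tail hβ) hcov
      exact ⟨n, fun _ => hn⟩
    · exact ⟨0, fun h => absurd h hβ⟩
  choose nn hnn using step1
  -- some fiber of `nn` is uncountable
  have step2 : ∃ n₀, ¬ ({β | β < ω_ 1 ∧ nn β = n₀} : Set Ordinal.{u}).Countable := by
    by_contra hcon
    push_neg at hcon
    apply uncountable_Iio_omega1
    have hsub : (Set.Iio (ω_ 1) : Set Ordinal.{u}) ⊆
        ⋃ n, {β | β < ω_ 1 ∧ nn β = n} := by
      intro β hβ
      exact Set.mem_iUnion.mpr ⟨nn β, hβ, rfl⟩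
    exact ((Set.countable_iUnion hcon).mono hsub)
  obtain ⟨n₀, hn₀⟩ := step2
  have hinf : ({β | β < ω_ 1 ∧ nn β = n₀} : Set Ordinal.{u}).Infinite :=
    fun hfin => hn₀ hfin.countable
  let b := hinf.natEmbedding
  refine ⟨fun k => A n₀ (b k), ?_, ?_, ?_⟩
  · intro k
    have hk := (b k).2
    have := hnn (b k) hk.1
    rwa [hk.2] at this
  · intro k α hα
    exact ⟨lt_of_le_of_lt zero_le hα.1, hα.2.1⟩
  · intro j k α hj hk
    have hα : α < ω_ 1 := hj.2.1
    have hbj : ((b j : Ordinal.{u})) ∈ Set.Iio α := hj.1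
    have hbk : ((b k : Ordinal.{u})) ∈ Set.Iio α := hk.1
    have heq : (b j : Ordinal.{u}) = (b k : Ordinal.{u}) := by
      apply he α hα hbj hbk
      rw [hj.2.2, hk.2.2]
    exact b.injective (Subtype.ext heq)

/-- The bad decreasing sequence: stationary sets decreasing to the empty set. -/
lemma exists_bad_D : ∃ D : ℕ → Set Ordinal.{u},
    (∀ n, D (n + 1) ⊆ D n) ∧ (⋂ n, D n) = ∅ ∧ (∀ n, IsStat (D n)) ∧
      ∀ n, D n ⊆ Set.Ioo 0 (ω_ 1) := by
  obtain ⟨S, hstat, hsub, hdisj⟩ := exists_disjoint_stationary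
  refine ⟨fun n => {α | ∃ k, n ≤ k ∧ α ∈ S k}, ?_, ?_, ?_, ?_⟩
  · rintro n α ⟨k, hk1, hk2⟩
    exact ⟨k, le_trans (Nat.le_succ n) hk1, hk2⟩
  · rw [Set.eq_empty_iff_forall_notMem]
    intro α hα
    obtain ⟨k₀, _, hk₀⟩ := Set.mem_iInter.mp hα 0
    obtain ⟨k₁, hk₁le, hk₁⟩ := Set.mem_iInter.mp hα (k₀ + 1)
    have : k₀ = k₁ := hdisj k₀ k₁ α hk₀ hk₁
    omega
  · intro n
    exact (hstat n).mono (fun α hα => ⟨n, le_rfl, hα⟩)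
  · rintro n α ⟨k, _, hk⟩
    exact hsub k hk

end DeltaAux
end DeltaAux

def IsDeltaSpace (X : Type*) [TopologicalSpace X] : Prop :=
  ∀ D : ℕ → Set X, (∀ n, D (n + 1) ⊆ D n) → (⋂ n, D n) = ∅ →
    ∃ V : ℕ → Set X, (∀ n, IsOpen (V n)) ∧ (∀ n, V (n + 1) ⊆ V n) ∧
      (⋂ n, V n) = ∅ ∧ ∀ n, D n ⊆ V n

theorem ordinalSpace_omega1_not_isDeltaSpace :
    ¬ IsDeltaSpace (Set.Iic (ω_ 1)) := by
  intro hDelta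
  obtain ⟨D', hdec, hint, hstat, hsub⟩ := DeltaAux.exists_bad_D
  set X : Set Ordinal := Set.Iic (ω_ 1) with hX
  have hXopen : IsOpen X := by
    rw [hX, ← Order.Iio_succ]
    exact isOpen_Iio
  let D : ℕ → Set X := fun n => Subtype.val ⁻¹' (D' n)
  have hDdec : ∀ n, D (n + 1) ⊆ D n := fun n x hx => hdec n hx
  have hDint : (⋂ n, D n) = ∅ := by
    rw [Set.eq_empty_iff_forall_notMem]
    intro x hx
    have : (x : Ordinal) ∈ ⋂ n, D' n :=
      Set.mem_iInter.mpr fun n => Set.mem_iInter.mp hx n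
    rw [hint] at this
    exact this
  obtain ⟨V, hVopen, hVdec, hVint, hDV⟩ := hDelta D hDdec hDint
  -- push everything to open sets of ordinals
  let W : ℕ → Set Ordinal := fun n => Subtype.val '' V n
  have hWopen : ∀ n, IsOpen (W n) := fun n =>
    hXopen.isOpenMap_subtype_val _ (hVopen n)
  have hD'W : ∀ n, D' n ⊆ W n := by
    intro n α hα
    have hα1 : α < ω_ 1 := (hsub n hα).2
    exact ⟨⟨α, le_of_lt hα1⟩, hDV n hα, rfl⟩
  -- each `W n` contains a tail of `ω₁`
  have key : ∀ n, ∃ β < ω_ 1, Set.Ioo β (ω_ 1) ⊆ W n := by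
    intro n
    have hreg : ∀ α : Ordinal, ∃ b, α ∈ D' n → b < α ∧ Set.Ioc b α ⊆ W n := by
      intro α
      by_cases hα : α ∈ D' n
      · have h0 : (0 : Ordinal) < α := (hsub n hα).1
        have hmem : α ∈ W n := hD'W n hα
        obtain ⟨b, hb1, hb2⟩ := (SuccOrder.hasBasis_nhds_Ioc_of_exists_lt ⟨0, h0⟩).mem_iff.mp
          ((hWopen n).mem_nhds hmem)
        exact ⟨b, fun _ => ⟨hb1, hb2⟩⟩
      · exact ⟨0, fun h => absurd h hα⟩
    choose g hg using hreg
    have hDsub : D' n ⊆ Set.Iio (ω_ 1) := fun α hα => (hsub n hα).2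
    obtain ⟨β, hβ⟩ := DeltaAux.fodor (hstat n) hDsub g (fun α hα => (hg α hα).1)
    obtain ⟨α₀, hα₀D, _, hα₀g⟩ := hβ 0 (omega_pos 1)
    have hβlt : β < ω_ 1 := by
      rw [← hα₀g]
      exact lt_trans ((hg α₀ hα₀D).1) ((hsub n hα₀D).2)
    refine ⟨β, hβlt, ?_⟩
    intro x hx
    obtain ⟨α, hαD, hxα, hαg⟩ := hβ x hx.2
    apply (hg α hαD).2
    rw [hαg]
    exact ⟨hx.1, le_of_lt hxα⟩
  choose β hβ1 hβ2 using key
  have hsup : iSup β < ω_ 1 := DeltaAux.sup_lt_omega1 hβ1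
  set x : Ordinal := iSup β + 1 with hxdef
  have hxlt : x < ω_ 1 := DeltaAux.add_one_lt_omega1 hsup
  have hxW : ∀ n, x ∈ W n := by
    intro n
    apply hβ2 n
    constructor
    · exact lt_of_le_of_lt (le_ciSup (Ordinal.bddAbove_range β) n) (lt_add_one _)
    · exact hxlt
  have hxV : ∀ n, (⟨x, le_of_lt hxlt⟩ : X) ∈ V n := by
    intro n
    obtain ⟨y, hy, hyx⟩ := hxW n
    have : y = ⟨x, le_of_lt hxlt⟩ := Subtype.ext hyx
    rwa [this] at hy
  have : (⟨x, le_of_lt hxlt⟩ : X) ∈ ⋂ n, V n := Set.mem_iInter.mpr hxV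
  rw [hVint] at this
  exact this
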